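/- Let k ∈ ℂ, let (S, C, D) be a Jacobi triple with modulus k, let κ, β ∈ ℂ with κ² = k, κ ≠ 0, β² = 1 − k, and let p, q ∈ ℤ. On the open set U = { z ∈ ℂ : D(z/κ) ≠ 0 }, the triple (z ↦ (−1)^p κ·C(z/κ)/D(z/κ), z ↦ (−1)^{p+q} β/D(z/κ), z ↦ (−1)^{q+1} β·S(z/κ)/D(z/κ)) satisfies system (1) with modulus 1/k. (This is the reciprocal-modulus form of sn = (−1)^p √k cd, cn = (−1)^{p+q} √(1−k) nd, dn = (−1)^{q+1} √(1−k) sd.) -/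

import Mathlib

/-- A Jacobi triple with modulus `k`: the model is `(sn(·|k), cn(·|k), dn(·|k))`. -/
def IsJacobiTriple (k : ℂ) (S C D : ℂ → ℂ) : Prop :=
  ∀ z : ℂ, HasDerivAt S (C z * D z) z ∧ HasDerivAt C (-(S z * D z)) z ∧
    HasDerivAt D (-(k * S z * C z)) z ∧
    S z ^ 2 + C z ^ 2 = 1 ∧ D z ^ 2 + k * S z ^ 2 = 1

/-- A triple `(St, Ct, Dt)` satisfies system (1) with modulus `m` on `U`:
at every point of `U` the functions are differentiable with `St′ = Ct·Dt`,
and `St² + Ct² = 1` and `Dt² + m·St² = 1` hold on `U`. -/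
def SatisfiesSystem1 (m : ℂ) (St Ct Dt : ℂ → ℂ) (U : Set ℂ) : Prop :=
  ∀ z ∈ U, HasDerivAt St (Ct z * Dt z) z ∧
    DifferentiableAt ℂ Ct z ∧ DifferentiableAt ℂ Dt z ∧
    St z ^ 2 + Ct z ^ 2 = 1 ∧ Dt z ^ 2 + m * St z ^ 2 = 1

theorem stmt_2 (k : ℂ) (S C D : ℂ → ℂ) (hJ : IsJacobiTriple k S C D)
    (κ β : ℂ) (hκ : κ ^ 2 = k) (hκ0 : κ ≠ 0) (hβ : β ^ 2 = 1 - k) (p q : ℤ) :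
    SatisfiesSystem1 (1 / k)
      (fun z => (-1 : ℂ) ^ p * κ * C (z / κ) / D (z / κ))
      (fun z => (-1 : ℂ) ^ (p + q) * β / D (z / κ))
      (fun z => (-1 : ℂ) ^ (q + 1) * β * S (z / κ) / D (z / κ))
      {z : ℂ | D (z / κ) ≠ 0} := by
  intro z hz
  have hd : D (z / κ) ≠ 0 := hz
  have hk : k ≠ 0 := by
    rw [← hκ]; exact pow_ne_zero 2 hκ0
  obtain ⟨hS, hC, hD, hI1, hI2⟩ := hJ (z / κ)
  set e : ℂ := (-1 : ℂ) ^ p with he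
  set f : ℂ := (-1 : ℂ) ^ q with hf
  have he2 : e ^ 2 = 1 := by
    rw [he, ← zpow_natCast (((-1 : ℂ)) ^ p) 2, ← zpow_mul, mul_comm, zpow_mul]
    norm_num
  have hf2 : f ^ 2 = 1 := by
    rw [hf, ← zpow_natCast (((-1 : ℂ)) ^ q) 2, ← zpow_mul, mul_comm, zpow_mul]
    norm_num
  have hepq : (-1 : ℂ) ^ (p + q) = e * f := zpow_add₀ (by norm_num) p q
  have heq1 : (-1 : ℂ) ^ (q + 1) = f * (-1) := by
    rw [zpow_add₀ (by norm_num : (-1 : ℂ) ≠ 0) q 1, zpow_one, hf]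
  -- derivative of inner map
  have hinner : HasDerivAt (fun z : ℂ => z / κ) (1 / κ) z := by
    simpa using (hasDerivAt_id z).div_const κ
  have hCz : HasDerivAt (fun z : ℂ => C (z / κ)) (-(S (z / κ) * D (z / κ)) * (1 / κ)) z :=
    hC.comp z hinner
  have hDz : HasDerivAt (fun z : ℂ => D (z / κ)) (-(k * S (z / κ) * C (z / κ)) * (1 / κ)) z :=
    hD.comp z hinner
  have hSz : HasDerivAt (fun z : ℂ => S (z / κ)) (C (z / κ) * D (z / κ) * (1 / κ)) z :=
    hS.comp z hinner
  have hNum : HasDerivAt (fun z : ℂ => e * κ * C (z / κ)) (e * κ * (-(S (z / κ) * D (z / κ)) * (1 / κ))) z :=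
    hCz.const_mul (e * κ)
  have hSt : HasDerivAt (fun z : ℂ => e * κ * C (z / κ) / D (z / κ))
      ((e * κ * (-(S (z / κ) * D (z / κ)) * (1 / κ)) * D (z / κ) - e * κ * C (z / κ) * (-(k * S (z / κ) * C (z / κ)) * (1 / κ))) / D (z / κ) ^ 2) z :=
    hNum.div hDz hd
  refine ⟨?_, ?_, ?_, ?_, ?_⟩
  · convert hSt using 1
    rw [hepq, heq1]
    field_simp
    linear_combination (norm := ring_nf) (-(e * κ ^ 2 * S (z / κ) * D (z / κ) ^ 2 * β ^ 2)) * hf2 +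
      (-(e * κ ^ 2 * S (z / κ) * D (z / κ) ^ 2)) * hβ + (e * κ ^ 2 * S (z / κ) * D (z / κ) ^ 2) * hI2 +
      (-(e * k * κ ^ 2 * S (z / κ) * D (z / κ) ^ 2)) * hI1 +
      (e * S (z / κ) * (β ^ 2 * κ ^ 2 * D (z / κ) ^ 2 - β ^ 2)) * hf2 + (e * S (z / κ) * (κ ^ 2 * D (z / κ) ^ 2 - 1)) * hβ +
      (e * S (z / κ) * ((1 - k) * D (z / κ) ^ 2 + k * D (z / κ) ^ 2 * C (z / κ) ^ 2 - D (z / κ) ^ 4)) * hκ +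
      (e * S (z / κ) * k * (k * D (z / κ) ^ 2 - 1)) * hI1 + (e * S (z / κ) * (1 - k * D (z / κ) ^ 2)) * hI2
  · exact ((differentiableAt_const _).div hDz.differentiableAt hd)
  · exact (((hSz.differentiableAt).const_mul _).div hDz.differentiableAt hd)
  · rw [hepq]
    field_simp
    linear_combination (norm := ring_nf) (κ ^ 2 * C (z / κ) ^ 2 + f ^ 2 * β ^ 2) * he2 + β ^ 2 * hf2 +
      C (z / κ) ^ 2 * hκ + hβ - hI2 + k * hI1
  · rw [heq1]
    field_simp
    linear_combination (norm := ring_nf) (β ^ 2 * S (z / κ) ^ 2 * k * D (z / κ) ^ 2) * hf2 +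
      (S (z / κ) ^ 2 * k * D (z / κ) ^ 2) * hβ + (D (z / κ) ^ 2 * e ^ 2 * C (z / κ) ^ 2) * hκ +
      (k * D (z / κ) ^ 2 * C (z / κ) ^ 2) * he2 + (-(k * D (z / κ) ^ 2)) * hI2 + (k * D (z / κ) ^ 2) * hI1 +
        ((1 - D (z / κ) ^ 2) * β ^ 2 * S (z / κ) ^ 2 * k) * hf2 + ((1 - D (z / κ) ^ 2) * S (z / κ) ^ 2 * k) * hβ + ((1 - D (z / κ) ^ 2) * e ^ 2 * C (z / κ) ^ 2) * hκ +
        ((1 - D (z / κ) ^ 2) * k * C (z / κ) ^ 2) * he2 + ((1 - D (z / κ) ^ 2) * k) * hI1 - ((1 - D (z / κ) ^ 2) * k) * hI2
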